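/- Let P be an orthogonal projection and X Hermitian with X = XP + PX. Then for every integer k ≥ 0, P X^{2k} = X^{2k} P and P X^{2k+1} P = 0; moreover P|X| = |X|P = |XP|. -/

import Mathlib

open Matrix
open scoped ComplexOrder

noncomputable section

namespace Matrix.PosSemidef
variable {n : Type*} [Fintype n] [DecidableEq n] {𝕜 : Type*} [RCLike 𝕜] {A : Matrix n n 𝕜}
noncomputable def sqrt (hA : A.PosSemidef) : Matrix n n 𝕜 :=
  hA.1.eigenvectorUnitary.1 * diagonal ((↑) ∘ Real.sqrt ∘ hA.1.eigenvalues) *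
  (star hA.1.eigenvectorUnitary : Matrix n n 𝕜)
lemma posSemidef_sqrt (hA : A.PosSemidef) : PosSemidef hA.sqrt := by
  unfold sqrt
  have hd : (diagonal ((↑) ∘ Real.sqrt ∘ hA.1.eigenvalues : n → 𝕜)).PosSemidef := by
    refine PosSemidef.diagonal ?_
    intro i
    simp [Real.sqrt_nonneg]
  simpa [Matrix.star_eq_conjTranspose] using hd.mul_mul_conjTranspose_same (hA.1.eigenvectorUnitary.1)
open scoped MatrixOrder in
lemma sqrt_eq_cfcSqrt (hA : A.PosSemidef) : hA.sqrt = CFC.sqrt A := by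
  rw [CFC.sqrt_eq_cfc, cfc_nnreal_eq_real _ A, hA.1.cfc_eq]
  simp only [sqrt, IsHermitian.cfc, Unitary.conjStarAlgAut_apply]
  congr 3
  funext i
  simp [Real.coe_toNNReal', max_eq_left (hA.eigenvalues_nonneg i)]
open scoped MatrixOrder in
lemma sq_sqrt (hA : A.PosSemidef) : hA.sqrt ^ 2 = A := by
  rw [sqrt_eq_cfcSqrt]
  exact CFC.sq_sqrt A hA.nonneg
open scoped MatrixOrder in
lemma eq_sqrt_of_sq_eq {B : Matrix n n 𝕜} (hB : B.PosSemidef) (hA : A.PosSemidef)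
    (h : B ^ 2 = A) : B = hA.sqrt := by
  rw [sqrt_eq_cfcSqrt]
  exact (CFC.sqrt_unique (by rw [← h, sq]) hB.nonneg).symm
end Matrix.PosSemidef

/-- n×n complex matrices -/
abbrev Mat (n : ℕ) := Matrix (Fin n) (Fin n) ℂ

/-- modulus |A| = sqrt (Aᴴ A) -/
noncomputable def matAbs {n : ℕ} (A : Mat n) : Mat n :=
  (Matrix.posSemidef_conjTranspose_mul_self A).sqrt

/-- spectral (operator) norm -/
noncomputable def specNorm {n : ℕ} (A : Mat n) : ℝ :=
  ‖Matrix.toEuclideanCLM (𝕜 := ℂ) (n := Fin n) A‖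

/-- Löwner order: `A ≤ B` iff `B - A` is positive semidefinite -/
def loewnerLE {n : ℕ} (A B : Mat n) : Prop := (B - A).PosSemidef

/-- singular values of `A`, arranged in non-increasing order -/
noncomputable def sval {n : ℕ} (A : Mat n) : Fin n → ℝ :=
  fun i =>
    let e := ((Matrix.posSemidef_conjTranspose_mul_self A).posSemidef_sqrt).1.eigenvalues
    (e ∘ Tuple.sort e) i.rev

/-- singular values indexed by naturals (0 beyond the size) -/
noncomputable def svalNat {n : ℕ} (A : Mat n) (k : ℕ) : ℝ :=
  if h : k < n then sval A ⟨k, h⟩ else 0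

/-- eigenvalues of a Hermitian matrix, arranged in non-increasing order -/
noncomputable def eigsDesc {n : ℕ} {A : Mat n} (hA : A.IsHermitian) : Fin n → ℝ :=
  fun i => (hA.eigenvalues ∘ Tuple.sort hA.eigenvalues) i.rev

theorem stmt15 {n : ℕ} (P X : Mat n) (hP : P.IsHermitian) (hP2 : P * P = P)
    (hX : X.IsHermitian) (hcod : X = X * P + P * X) :
    (∀ k : ℕ, P * X ^ (2 * k) = X ^ (2 * k) * P ∧ P * X ^ (2 * k + 1) * P = 0) ∧
    P * matAbs X = matAbs X * P ∧ matAbs X * P = matAbs (X * P) := by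
  have hPXP : P * X * P = 0 := by
    have h1 : P * X = P * X * P + P * X := by
      conv_lhs => rw [hcod]
      rw [mul_add, ← mul_assoc, ← mul_assoc, hP2]
    have := congrArg (· - P * X) h1
    simpa using this.symm
  have hPX : P * X = X - X * P := by
    rw [eq_sub_iff_add_eq']; exact hcod.symm
  have hXP : X * P = X - P * X := by
    rw [eq_sub_iff_add_eq]; exact hcod.symm
  have hcomm2 : P * (X * X) = (X * X) * P := by
    calc P * (X * X) = (X - X * P) * X := by rw [← mul_assoc, hPX]
      _ = X * X - X * (P * X) := by noncomm_ring
      _ = X * X - X * (X - X * P) := by rw [hPX]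
      _ = X * (X * P) := by noncomm_ring
      _ = (X * X) * P := by noncomm_ring
  have hcommSq : ∀ k : ℕ, P * X ^ (2 * k) = X ^ (2 * k) * P := by
    intro k
    induction k with
    | zero => simp
    | succ k ih =>
      have h : 2 * (k + 1) = 2 * k + 2 := by ring
      rw [h, pow_add, ← mul_assoc, ih, pow_two, mul_assoc, hcomm2, ← mul_assoc]
  have hodd : ∀ k : ℕ, P * X ^ (2 * k + 1) * P = 0 := by
    intro k
    rw [pow_add, pow_one, ← mul_assoc, hcommSq k, mul_assoc, mul_assoc, ← mul_assoc P X P,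
      hPXP]
    simp
  -- |X| facts
  have hSpsd : (matAbs X).PosSemidef := (Matrix.posSemidef_conjTranspose_mul_self X).posSemidef_sqrt
  have hS2 : matAbs X ^ 2 = Xᴴ * X := (Matrix.posSemidef_conjTranspose_mul_self X).sq_sqrt
  have hX2 : Xᴴ * X = X * X := by rw [hX.eq]
  set S := matAbs X with hSdef
  have hPS : P * S = S * P := by
    set U : Mat n := 1 - (2 : ℂ) • P with hU
    have hUH : Uᴴ = U := by
      simp [hU, conjTranspose_sub, conjTranspose_smul, hP.eq]
    have hU2 : U * U = 1 := by
      simp only [hU, sub_mul, mul_sub, one_mul, mul_one, smul_mul_assoc, mul_smul_comm, hP2,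
        smul_smul]
      module
    have hUS : (U * S * U).PosSemidef := by
      have := hSpsd.conjTranspose_mul_mul_same U
      rwa [hUH] at this
    have hUSsq : (U * S * U) ^ 2 = Xᴴ * X := by
      have hUX2 : U * (X * X) = (X * X) * U := by
        simp only [hU, sub_mul, mul_sub, one_mul, mul_one, smul_mul_assoc, mul_smul_comm, hcomm2]
      calc (U * S * U) ^ 2 = U * S * (U * U) * S * U := by noncomm_ring
        _ = U * (S * S) * U := by rw [hU2]; noncomm_ring
        _ = U * (X * X) * U := by rw [← pow_two, hS2, hX2]
        _ = (X * X) * (U * U) := by rw [hUX2, mul_assoc]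
        _ = Xᴴ * X := by rw [hU2, mul_one, hX2]
    have hEq : U * S * U = S :=
      hUS.eq_sqrt_of_sq_eq (Matrix.posSemidef_conjTranspose_mul_self X) hUSsq
    have hUScomm : U * S = S * U := by
      have h := congrArg (· * U) hEq
      simpa [mul_assoc, hU2] using h
    have h2 : (2 : ℂ) • (P * S) = (2 : ℂ) • (S * P) := by
      have h := hUScomm
      simp only [hU, sub_mul, mul_sub, one_mul, mul_one, smul_mul_assoc, mul_smul_comm] at h
      exact sub_right_injective h
    exact smul_right_injective _ (two_ne_zero) h2
  refine ⟨fun k => ⟨hcommSq k, hodd k⟩, hPS, ?_⟩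
  -- S * P = |XP|
  have hTpsd : (S * P).PosSemidef := by
    have h : S * P = Pᴴ * S * P := by
      rw [hP.eq, mul_assoc, ← hPS, ← mul_assoc, hP2]
    rw [h]
    exact hSpsd.conjTranspose_mul_mul_same P
  have hTsq : (S * P) ^ 2 = (X * P)ᴴ * (X * P) := by
    calc (S * P) ^ 2 = S * (P * S) * P := by noncomm_ring
      _ = (S * S) * (P * P) := by rw [hPS]; noncomm_ring
      _ = S ^ 2 * (P * P) := by rw [pow_two]
      _ = (X * X) * P := by rw [hS2, hX2, hP2]
      _ = (X * P)ᴴ * (X * P) := by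
          rw [conjTranspose_mul, hX.eq, hP.eq]
          calc X * X * P = X * X * (P * P) := by rw [hP2]
            _ = (X * X * P) * P := by noncomm_ring
            _ = (P * (X * X)) * P := by rw [hcomm2]
            _ = P * X * (X * P) := by noncomm_ring
  exact hTpsd.eq_sqrt_of_sq_eq (Matrix.posSemidef_conjTranspose_mul_self (X * P)) hTsq


end
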